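/- In SL_∞(ℤ), any elementary matrix E_{ij}(1) = I + e_{ij} (i ≠ j) normally generates the whole group: the normal closure of E_{ij}(1) in SL_∞(ℤ) is SL_∞(ℤ). -/

import Mathlib

/-- The shear endomorphism `v ↦ v + v(j) • e_i` of `ℤ^{⊕ℕ}`, i.e. the elementary matrix
`E_{ij}(1) = I + e_{ij}`. -/
noncomputable def shear (i j : ℕ) : Module.End ℤ (ℕ →₀ ℤ) :=
  1 + (Finsupp.lsingle i).comp (Finsupp.lapply j)

theorem shear_mul_aux {i j : ℕ} (h : i ≠ j) :
    ((Finsupp.lsingle i).comp (Finsupp.lapply j) : Module.End ℤ (ℕ →₀ ℤ)) *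
      (Finsupp.lsingle i).comp (Finsupp.lapply j) = 0 := by
  ext v
  simp only [Module.End.mul_apply, LinearMap.comp_apply, Finsupp.lapply_apply,
    Finsupp.lsingle_apply, Finsupp.single_apply, LinearMap.zero_apply]
  simp [h]

/-- The elementary matrix `E_{ij}(1)` as an invertible element (its inverse is `E_{ij}(-1)`). -/
noncomputable def elemUnit (i j : ℕ) (h : i ≠ j) : (Module.End ℤ (ℕ →₀ ℤ))ˣ where
  val := shear i j
  inv := 1 - (Finsupp.lsingle i).comp (Finsupp.lapply j)
  val_inv := by
    simp only [shear, add_mul, mul_sub, mul_one, one_mul, shear_mul_aux h]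
    abel
  inv_val := by
    simp only [shear, sub_mul, mul_add, mul_one, one_mul, shear_mul_aux h]
    abel

/-- `SL_∞(ℤ)`: the group generated by all elementary matrices `E_{ij}(1)`, `i ≠ j`.  Since
each `SL_n(ℤ)` is generated by its elementary matrices, this is the union (direct limit) of
the chain `SL₂(ℤ) ⊂ SL₃(ℤ) ⊂ ⋯` inside the endomorphisms of `ℤ^{⊕ℕ}`. -/
noncomputable def SLinf : Subgroup (Module.End ℤ (ℕ →₀ ℤ))ˣ :=
  Subgroup.closure {u | ∃ (i j : ℕ) (h : i ≠ j), u = elemUnit i j h}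

/-- Product of two matrix units. -/
lemma Emul (i j k l : ℕ) :
    ((Finsupp.lsingle i).comp (Finsupp.lapply j) : Module.End ℤ (ℕ →₀ ℤ)) *
      (Finsupp.lsingle k).comp (Finsupp.lapply l) =
    if j = k then (Finsupp.lsingle i).comp (Finsupp.lapply l) else 0 := by
  ext v
  simp [Module.End.mul_apply, Finsupp.single_apply]
  split_ifs <;> simp_all

/-- Steinberg commutator relation for elementary matrices, at the level of units. -/
lemma elemUnit_comm {a b c : ℕ} (hab : a ≠ b) (hbc : b ≠ c) (hac : a ≠ c) :
    elemUnit a b hab * elemUnit b c hbc * (elemUnit a b hab)⁻¹ * (elemUnit b c hbc)⁻¹ =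
      elemUnit a c hac := by
  rw [Units.ext_iff]
  show (shear a b * shear b c) * ((elemUnit a b hab).inv * (elemUnit b c hbc).inv) = shear a c
  simp only [elemUnit, shear]
  noncomm_ring
  simp [Emul, hab, hbc, hac, hab.symm, hbc.symm, hac.symm]

/-- The elementary matrix `E_{kl}(1)` as an element of `SL_∞(ℤ)`. -/
noncomputable def gEl (k l : ℕ) (hkl : k ≠ l) : SLinf :=
  ⟨elemUnit k l hkl, Subgroup.subset_closure ⟨k, l, hkl, rfl⟩⟩

/-- Steinberg commutator relation inside `SL_∞(ℤ)`. -/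
lemma gEl_comm {a b c : ℕ} (hab : a ≠ b) (hbc : b ≠ c) (hac : a ≠ c) :
    gEl a b hab * gEl b c hbc * (gEl a b hab)⁻¹ * (gEl b c hbc)⁻¹ = gEl a c hac := by
  apply Subtype.ext
  simpa [gEl] using elemUnit_comm hab hbc hac

lemma stepR (N : Subgroup SLinf) (hN : N.Normal) {a b c : ℕ}
    (hab : a ≠ b) (hbc : b ≠ c) (hac : a ≠ c)
    (hm : gEl a b hab ∈ N) : gEl a c hac ∈ N := by
  have key : gEl a c hac =
      gEl a b hab * (gEl b c hbc * (gEl a b hab)⁻¹ * (gEl b c hbc)⁻¹) := by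
    rw [← gEl_comm hab hbc hac]; group
  rw [key]
  exact mul_mem hm (hN.conj_mem _ (inv_mem hm) _)

lemma stepL (N : Subgroup SLinf) (hN : N.Normal) {a b c : ℕ}
    (hab : a ≠ b) (hbc : b ≠ c) (hac : a ≠ c)
    (hm : gEl b c hbc ∈ N) : gEl a c hac ∈ N := by
  have key : gEl a c hac =
      (gEl a b hab * gEl b c hbc * (gEl a b hab)⁻¹) * (gEl b c hbc)⁻¹ := by
    rw [← gEl_comm hab hbc hac]
  rw [key]
  exact mul_mem (hN.conj_mem _ hm _) (inv_mem hm)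

lemma gEl_mem_normalClosure (i j : ℕ) (h : i ≠ j) (k l : ℕ) (hkl : k ≠ l) :
    gEl k l hkl ∈ Subgroup.normalClosure ({gEl i j h} : Set SLinf) := by
  set N := Subgroup.normalClosure ({gEl i j h} : Set SLinf) with hNdef
  have hN : N.Normal := Subgroup.normalClosure_normal
  have h0 : gEl i j h ∈ N := Subgroup.subset_normalClosure rfl
  set m := i + j + k + l + 1 with hm
  set n := m + 1 with hn
  have h1 : gEl i m (by omega) ∈ N := stepR N hN h (by omega) (by omega) h0
  have h2 : gEl n m (by omega) ∈ N := stepL N hN (show n ≠ i by omega) (by omega) (by omega) h1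
  have h3 : gEl n l (by omega) ∈ N := stepR N hN (show n ≠ m by omega) (by omega) (by omega) h2
  exact stepL N hN (show k ≠ n by omega) (by omega) hkl h3

/-- Any elementary matrix `E_{ij}(1)` (`i ≠ j`) normally generates `SL_∞(ℤ)`: its normal
closure in `SL_∞(ℤ)` is the whole group. -/
theorem slinf_normally_generated_by_elementary (i j : ℕ) (h : i ≠ j) :
    Subgroup.normalClosure
      ({⟨elemUnit i j h, Subgroup.subset_closure ⟨i, j, h, rfl⟩⟩} : Set SLinf) = ⊤ := by
  rw [Subgroup.eq_top_iff']
  intro x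
  obtain ⟨u, hu⟩ := x
  have key : ∀ u (hu : u ∈ Subgroup.closure {u | ∃ (i j : ℕ) (h : i ≠ j), u = elemUnit i j h}),
      (⟨u, hu⟩ : SLinf) ∈ Subgroup.normalClosure ({gEl i j h} : Set SLinf) := by
    intro u hu
    induction hu using Subgroup.closure_induction with
    | mem x hx =>
      obtain ⟨a, b, hab, rfl⟩ := hx
      exact gEl_mem_normalClosure i j h a b hab
    | one => exact one_mem _
    | mul x y hx hy hx' hy' => exact mul_mem hx' hy'
    | inv x hx hx' => exact inv_mem hx'
  exact key u hu
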